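/- Let (M_k, Q_k)_{k≥1} be iid pairs of nonnegative random variables with P(M=0)=0, let c ≥ 0, γ = e^{-c}, S_n = Σ_{k=1}^n log M_k, and suppose σ := inf{n ≥ 1 : S_n + cn < 0} is a.s. finite. Let (σ_n)_{n≥0} be the corresponding ladder epochs (σ_0 = 0, σ_n the n-th strict descending ladder epoch of (S_n + cn)). Define X_n = M_n X_{n-1} + Q_n and X_n(γ) = γ X_{n-1}(γ) + Q_n with X_0 = X_0(γ) ≥ 0. Then X_{σ_n} ≤ X_{σ_n}(γ) a.s. for all n ≥ 0. -/

import Mathlib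

open MeasureTheory ProbabilityTheory Filter

lemma aux_expand (a q x : ℕ → ℝ)
    (hx : ∀ n, x (n + 1) = a (n + 1) * x n + q (n + 1)) (j : ℕ) :
    ∀ d, x (j + d) = (∏ k ∈ Finset.Icc (j+1) (j+d), a k) * x j +
      ∑ i ∈ Finset.Icc (j+1) (j+d), (∏ k ∈ Finset.Icc (i+1) (j+d), a k) * q i := by
  intro d
  induction d with
  | zero => simp
  | succ d ih =>
    have h1 : j + (d + 1) = (j + d) + 1 := by ring
    have h2 : ∀ i ∈ Finset.Icc (j+1) (j+d),
        (∏ k ∈ Finset.Icc (i+1) (j+d+1), a k) * q i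
        = a (j + d + 1) * ((∏ k ∈ Finset.Icc (i+1) (j+d), a k) * q i) := by
      intro i hi
      simp only [Finset.mem_Icc] at hi
      rw [Finset.prod_Icc_succ_top (by omega : i + 1 ≤ j + d + 1)]
      ring
    have h3 : Finset.Icc (j + d + 1 + 1) (j + d + 1) = ∅ := by
      apply Finset.Icc_eq_empty; omega
    rw [h1, hx (j + d), ih,
        Finset.prod_Icc_succ_top (by omega : j + 1 ≤ j + d + 1),
        Finset.sum_Icc_succ_top (by omega : j + 1 ≤ j + d + 1),
        Finset.sum_congr rfl h2, h3, mul_add, Finset.mul_sum]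
    simp only [Finset.prod_empty, one_mul]
    ring

lemma aux_compare (a q x y : ℕ → ℝ) (γ : ℝ) (hq : ∀ k, 0 ≤ q k)
    (hx : ∀ n, x (n + 1) = a (n + 1) * x n + q (n + 1))
    (hy : ∀ n, y (n + 1) = γ * y n + q (n + 1))
    (j m : ℕ) (hjm : j ≤ m) (hxj : 0 ≤ x j) (hxy : x j ≤ y j) (hγ0 : 0 ≤ γ)
    (hprod : ∀ i, j ≤ i → i ≤ m → ∏ k ∈ Finset.Icc (i+1) m, a k ≤ γ ^ (m - i)) :
    x m ≤ y m := by
  obtain ⟨d, rfl⟩ := Nat.exists_eq_add_of_le hjm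
  have hy' : ∀ n, y (n + 1) = (fun _ => γ) (n + 1) * y n + q (n + 1) := hy
  rw [aux_expand a q x hx j d, aux_expand (fun _ => γ) q y hy' j d]
  have hcard : ∀ i : ℕ, (∏ _k ∈ Finset.Icc (i+1) (j+d), γ) = γ ^ (j + d - i) := by
    intro i
    rw [Finset.prod_const, Nat.card_Icc]
    congr 1
    omega
  apply add_le_add
  · rw [hcard j]
    exact mul_le_mul (hprod j le_rfl (by omega)) hxy hxj (pow_nonneg hγ0 _)
  · apply Finset.sum_le_sum
    intro i hi
    simp only [Finset.mem_Icc] at hi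
    rw [hcard i]
    exact mul_le_mul_of_nonneg_right (hprod i (by omega) (by omega)) (hq i)

theorem stmt_8 {Ω : Type*} [MeasureSpace Ω] [IsProbabilityMeasure (ℙ : Measure Ω)]
    (M Q : ℕ → Ω → ℝ)
    (hmeas : ∀ n, Measurable (fun ω => (M n ω, Q n ω)))
    (hindep : iIndepFun (fun n ω => (M n ω, Q n ω)) ℙ)
    (hident : ∀ n, IdentDistrib (fun ω => (M n ω, Q n ω)) (fun ω => (M 1 ω, Q 1 ω)) ℙ ℙ)
    (hM0 : ∀ n ω, 0 ≤ M n ω) (hQ0 : ∀ n ω, 0 ≤ Q n ω)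
    (hMne0 : ℙ {ω | M 1 ω = 0} = 0)
    (c γ : ℝ) (hc : 0 ≤ c) (hγ : γ = Real.exp (-c))
    (S : ℕ → Ω → ℝ) (hS : ∀ n ω, S n ω = ∑ k ∈ Finset.Icc 1 n, Real.log (M k ω))
    (σ : ℕ → Ω → ℕ) (hσ0 : ∀ ω, σ 0 ω = 0)
    (hσ : ∀ n ω, σ (n + 1) ω =
      sInf {k : ℕ | σ n ω < k ∧ S k ω + c * k < S (σ n ω) ω + c * (σ n ω)})
    (hσfin : ∀ᵐ ω ∂ℙ, ∀ n : ℕ,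
      {k : ℕ | σ n ω < k ∧ S k ω + c * k < S (σ n ω) ω + c * (σ n ω)}.Nonempty)
    (X Xγ : ℕ → Ω → ℝ) (X0 : Ω → ℝ) (hX0nn : ∀ ω, 0 ≤ X0 ω)
    (hXinit : ∀ ω, X 0 ω = X0 ω) (hXγinit : ∀ ω, Xγ 0 ω = X0 ω)
    (hXrec : ∀ n ω, X (n + 1) ω = M (n + 1) ω * X n ω + Q (n + 1) ω)
    (hXγrec : ∀ n ω, Xγ (n + 1) ω = γ * Xγ n ω + Q (n + 1) ω) :
    ∀ᵐ ω ∂ℙ, ∀ n : ℕ, X (σ n ω) ω ≤ Xγ (σ n ω) ω := by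
  have hγ0 : 0 < γ := hγ ▸ Real.exp_pos _
  filter_upwards [hσfin] with ω hω
  -- nonnegativity of X
  have hXnn : ∀ n, 0 ≤ X n ω := by
    intro n
    induction n with
    | zero => rw [hXinit]; exact hX0nn ω
    | succ n ih =>
      rw [hXrec]
      exact add_nonneg (mul_nonneg (hM0 _ _) ih) (hQ0 _ _)
  -- sum decomposition of S
  have hSsplit : ∀ i m : ℕ, i ≤ m →
      S m ω - S i ω = ∑ k ∈ Finset.Icc (i+1) m, Real.log (M k ω) := by
    intro i m him
    have h1 : ∀ n : ℕ, S n ω = ∑ k ∈ Finset.Ioc 0 n, Real.log (M k ω) := by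
      intro n
      rw [hS]
      exact Finset.sum_congr (Finset.Icc_add_one_left_eq_Ioc 0 n) (fun _ _ => rfl)
    have h2 := Finset.sum_Ioc_consecutive (fun k => Real.log (M k ω))
      (Nat.zero_le i) him
    rw [h1, h1, ← h2, Finset.Icc_add_one_left_eq_Ioc]
    ring
  intro n
  induction n with
  | zero => rw [hσ0, hXinit, hXγinit]
  | succ n ih =>
    have hmT : σ (n+1) ω ∈
        {k : ℕ | σ n ω < k ∧ S k ω + c * k < S (σ n ω) ω + c * (σ n ω)} := by
      rw [hσ]
      exact Nat.sInf_mem (hω n)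
    obtain ⟨hjm', hless⟩ := hmT
    have hjm : σ n ω ≤ σ (n+1) ω := le_of_lt hjm'
    -- key inequality on S
    have hkey : ∀ i, σ n ω ≤ i → i < σ (n+1) ω →
        S (σ (n+1) ω) ω + c * (σ (n+1) ω) < S i ω + c * i := by
      intro i hji him
      rcases eq_or_lt_of_le hji with rfl | hji'
      · exact hless
      · by_contra hcon
        push_neg at hcon
        have hiS : S i ω + c * i < S (σ n ω) ω + c * (σ n ω) := lt_of_le_of_lt hcon hless
        have hmem : i ∈ {k : ℕ | σ n ω < k ∧ S k ω + c * k < S (σ n ω) ω + c * (σ n ω)} :=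
          ⟨hji', hiS⟩
        have h4 := Nat.sInf_le hmem
        rw [hσ] at him
        omega
    -- product bound
    have hprod : ∀ i, σ n ω ≤ i → i ≤ σ (n+1) ω →
        ∏ k ∈ Finset.Icc (i+1) (σ (n+1) ω), M k ω ≤ γ ^ (σ (n+1) ω - i) := by
      intro i hji him
      rcases eq_or_lt_of_le him with heq | him'
      · subst heq
        rw [Finset.Icc_eq_empty (by omega)]
        simp
      · have h1 : ∏ k ∈ Finset.Icc (i+1) (σ (n+1) ω), M k ω ≤
            ∏ k ∈ Finset.Icc (i+1) (σ (n+1) ω), Real.exp (Real.log (M k ω)) := by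
          apply Finset.prod_le_prod
          · intro k _; exact hM0 _ _
          · intro k _
            rcases eq_or_lt_of_le (hM0 k ω) with h | h
            · rw [← h]; simp
            · rw [Real.exp_log h]
        rw [← Real.exp_sum, ← hSsplit i (σ (n+1) ω) him] at h1
        have h2 : S (σ (n+1) ω) ω - S i ω ≤ -c * ((σ (n+1) ω - i : ℕ) : ℝ) := by
          have h3 := hkey i hji him'
          have hcast : ((σ (n+1) ω - i : ℕ) : ℝ) = (σ (n+1) ω : ℝ) - (i : ℝ) :=
            Nat.cast_sub him
          rw [hcast]
          nlinarith
        calc ∏ k ∈ Finset.Icc (i+1) (σ (n+1) ω), M k ω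
            ≤ Real.exp (S (σ (n+1) ω) ω - S i ω) := h1
          _ ≤ Real.exp (-c * ((σ (n+1) ω - i : ℕ) : ℝ)) := Real.exp_le_exp.mpr h2
          _ = γ ^ (σ (n+1) ω - i) := by
              rw [hγ, ← Real.exp_nat_mul]
              ring_nf
    exact aux_compare (fun k => M k ω) (fun k => Q k ω) (fun k => X k ω) (fun k => Xγ k ω)
      γ (fun k => hQ0 k ω) (fun k => hXrec k ω) (fun k => hXγrec k ω)
      (σ n ω) (σ (n+1) ω) hjm (hXnn _) ih (le_of_lt hγ0) hprod
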